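/- Let S₁, S₂ be two admissible involutions on a Krein space (W, Q), with associated compatible scalar products (v|w)ᵢ := (v|QSᵢw). Then K := S₂S₁ is pseudo-unitary for Q (i.e., (Kv|QKw) = (v|Qw)) and K is a positive operator with respect to the scalar product (·|·)₁: there is a > 0 with (v|Kv)₁ ≥ a(v|v)₁ for all v. Consequently 1 + K is invertible and ‖(1−K)(1+K)⁻¹‖₁ < 1. -/

import Mathlib

open ContinuousLinearMap in
lemma coercive_inverse13 {W : Type*} [NormedAddCommGroup W] [InnerProductSpace ℂ W]
    [CompleteSpace W] (B : W →L[ℂ] W) {c : ℝ} (hc : 0 < c)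
    (h : ∀ v : W, c * ‖v‖ ^ 2 ≤ ((inner ℂ v (B v) : ℂ)).re) :
    ∃ Binv : W →L[ℂ] W, B * Binv = 1 ∧ Binv * B = 1 := by
  have hlow : ∀ v : W, ‖v‖ ≤ c⁻¹ * ‖B v‖ := by
    intro v
    have h1 := h v
    have h2 : ((inner ℂ v (B v) : ℂ)).re ≤ ‖v‖ * ‖B v‖ := by
      calc ((inner ℂ v (B v) : ℂ)).re ≤ ‖(inner ℂ v (B v) : ℂ)‖ := Complex.abs_re_le_norm _ |>.trans' (le_abs_self _)
        _ ≤ ‖v‖ * ‖B v‖ := norm_inner_le_norm v (B v)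
    rcases eq_or_lt_of_le (norm_nonneg v) with h0 | h0
    · rw [← h0]; positivity
    · have h3 : c * ‖v‖ ≤ ‖B v‖ := by
        have := h1.trans h2
        rw [pow_two] at this
        nlinarith
      rw [le_inv_mul_iff₀ hc]
      linarith
  have hanti : AntilipschitzWith (c⁻¹).toNNReal B := by
    apply B.antilipschitz_of_bound
    intro x
    simpa [Real.coe_toNNReal _ (inv_nonneg.mpr hc.le)] using hlow x
  have hker : B.ker = ⊥ := by
    rw [LinearMap.ker_eq_bot']
    intro v hv
    have h1 := h v
    rw [show B v = 0 from hv] at h1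
    simp at h1
    have h5 : ‖v‖ ^ 2 ≤ 0 := le_of_mul_le_mul_left (by simpa using h1) hc
    have h6 : ‖v‖ ^ 2 = 0 := le_antisymm h5 (sq_nonneg _)
    have : ‖v‖ = 0 := by nlinarith [norm_nonneg v]
    simpa using this
  have hclosed : IsClosed (B.range : Set W) :=
    hanti.isClosed_range B.uniformContinuous
  haveI : CompleteSpace B.range := hclosed.completeSpace_coe
  have hrange : B.range = ⊤ := by
    rw [← Submodule.orthogonal_eq_bot_iff]
    rw [Submodule.eq_bot_iff]
    intro w hw
    have h0 : (inner ℂ (B w) w : ℂ) = 0 := hw (B w) (LinearMap.mem_range_self _ w)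
    have h1 : (inner ℂ w (B w) : ℂ) = 0 := by
      rw [← inner_conj_symm, h0, map_zero]
    have h2 := h w
    rw [h1] at h2
    simp at h2
    have h5 : ‖w‖ ^ 2 ≤ 0 := le_of_mul_le_mul_left (by simpa using h2) hc
    have h6 : ‖w‖ ^ 2 = 0 := le_antisymm h5 (sq_nonneg _)
    have : ‖w‖ = 0 := by nlinarith [norm_nonneg w]
    simpa using this
  let e := ContinuousLinearEquiv.ofBijective B hker hrange
  refine ⟨e.symm, ?_, ?_⟩
  · ext x
    have : B (e.symm x) = e (e.symm x) := rfl
    simp [ContinuousLinearMap.mul_apply, this]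
  · ext x
    have : B x = e x := rfl
    simp [ContinuousLinearMap.mul_apply, this]

set_option maxHeartbeats 1000000

/-- For two admissible involutions S₁, S₂ on a Krein space (W,Q), K = S₂S₁ is
pseudo-unitary and positive with respect to (·|·)₁; consequently 1 + K is
invertible and ‖(1-K)(1+K)⁻¹‖₁ < 1. -/
theorem stmt13 {W : Type*} [NormedAddCommGroup W] [InnerProductSpace ℂ W] [CompleteSpace W]
    (Q S₁ S₂ : W →L[ℂ] W) (hQ : IsSelfAdjoint Q)
    (h₁ : S₁ * S₁ = 1) (h₂ : S₂ * S₂ = 1)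
    (hpres₁ : ∀ v w : W, (inner ℂ (S₁ v) (Q (S₁ w)) : ℂ) = inner ℂ v (Q w))
    (hpres₂ : ∀ v w : W, (inner ℂ (S₂ v) (Q (S₂ w)) : ℂ) = inner ℂ v (Q w))
    (hpos₁ : (Q * S₁).IsPositive) (hpos₂ : (Q * S₂).IsPositive)
    (hbdd₁ : ∃ c > 0, ∀ v : W, c * ‖v‖ ^ 2 ≤ ((inner ℂ v ((Q * S₁) v) : ℂ)).re)
    (hbdd₂ : ∃ c > 0, ∀ v : W, c * ‖v‖ ^ 2 ≤ ((inner ℂ v ((Q * S₂) v) : ℂ)).re) :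
    let K := S₂ * S₁
    (∀ v w : W, (inner ℂ (K v) (Q (K w)) : ℂ) = inner ℂ v (Q w)) ∧
    (∃ a > 0, ∀ v : W,
      a * ((inner ℂ v ((Q * S₁) v) : ℂ)).re ≤ ((inner ℂ v ((Q * S₁) (K v)) : ℂ)).re) ∧
    (∃ Kinv : W →L[ℂ] W, (1 + K) * Kinv = 1 ∧ Kinv * (1 + K) = 1 ∧
      ∃ c : ℝ, 0 ≤ c ∧ c < 1 ∧ ∀ v : W,
        ((inner ℂ (((1 - K) * Kinv) v) ((Q * S₁) (((1 - K) * Kinv) v)) : ℂ)).re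
          ≤ c ^ 2 * ((inner ℂ v ((Q * S₁) v) : ℂ)).re) := by
  intro K
  obtain ⟨c₁, hc₁, hb₁⟩ := hbdd₁
  obtain ⟨c₂, hc₂, hb₂⟩ := hbdd₂
  set T := Q * S₁ with hTdef
  have hS₁S₁ : ∀ v : W, S₁ (S₁ v) = v := by
    intro v
    have := congrArg (fun f : W →L[ℂ] W => f v) h₁
    simpa using this
  have hKapp : ∀ v : W, K v = S₂ (S₁ v) := fun v => rfl
  -- key rewriting : (v | Kv)₁ = (S₁ v | Q S₂ (S₁ v))
  have hkey : ∀ v : W, (inner ℂ v (T (K v)) : ℂ) = inner ℂ (S₁ v) ((Q * S₂) (S₁ v)) := by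
    intro v
    have h := hpres₁ (S₁ v) (S₂ (S₁ v))
    rw [hS₁S₁ v] at h
    simpa [hTdef, ContinuousLinearMap.mul_apply, hKapp] using h
  -- part 2
  have hpart2 : ∃ a > 0, ∀ v : W,
      a * ((inner ℂ v (T v) : ℂ)).re ≤ ((inner ℂ v (T (K v)) : ℂ)).re := by
    refine ⟨c₂ / ((‖S₁‖ + 1) ^ 2 * (‖T‖ + 1)), by positivity, fun v => ?_⟩
    have hD : (0:ℝ) < (‖S₁‖ + 1) ^ 2 * (‖T‖ + 1) := by positivity
    rw [div_mul_eq_mul_div, div_le_iff₀ hD]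
    have hX : ((inner ℂ v (T v) : ℂ)).re ≤ (‖T‖ + 1) * ‖v‖ ^ 2 := by
      have h1 : ((inner ℂ v (T v) : ℂ)).re ≤ ‖(inner ℂ v (T v) : ℂ)‖ :=
        (Complex.abs_re_le_norm _).trans' (le_abs_self _)
      have h2 : ‖(inner ℂ v (T v) : ℂ)‖ ≤ ‖v‖ * ‖T v‖ := norm_inner_le_norm _ _
      have h3 : ‖T v‖ ≤ ‖T‖ * ‖v‖ := T.le_opNorm v
      nlinarith [norm_nonneg v, norm_nonneg (T v), norm_nonneg T]
    have hY : c₂ * ‖S₁ v‖ ^ 2 ≤ ((inner ℂ v (T (K v)) : ℂ)).re := by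
      rw [hkey v]; exact hb₂ (S₁ v)
    have hnv : ‖v‖ ≤ (‖S₁‖ + 1) * ‖S₁ v‖ := by
      have h4 : ‖S₁ (S₁ v)‖ ≤ ‖S₁‖ * ‖S₁ v‖ := S₁.le_opNorm (S₁ v)
      rw [hS₁S₁ v] at h4
      nlinarith [norm_nonneg (S₁ v)]
    have hnv2 : ‖v‖ ^ 2 ≤ (‖S₁‖ + 1) ^ 2 * ‖S₁ v‖ ^ 2 := by
      have := pow_le_pow_left₀ (norm_nonneg v) hnv 2
      calc ‖v‖ ^ 2 ≤ ((‖S₁‖ + 1) * ‖S₁ v‖) ^ 2 := this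
        _ = (‖S₁‖ + 1) ^ 2 * ‖S₁ v‖ ^ 2 := by ring
    -- c₂ * X ≤ Y * D
    have hXnn : (0:ℝ) ≤ ((inner ℂ v (T v) : ℂ)).re := le_trans (by positivity) (hb₁ v)
    nlinarith [mul_le_mul_of_nonneg_left hX hc₂.le,
      mul_le_mul_of_nonneg_left hnv2 (by positivity : (0:ℝ) ≤ c₂ * (‖T‖ + 1)),
      mul_le_mul_of_nonneg_left hY hD.le, sq_nonneg ‖S₁ v‖, norm_nonneg T, norm_nonneg S₁]
  obtain ⟨a, ha, hK⟩ := hpart2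
  refine ⟨?_, ⟨a, ha, hK⟩, ?_⟩
  · -- part 1: pseudo-unitarity
    intro v w
    show (inner ℂ (S₂ (S₁ v)) (Q (S₂ (S₁ w))) : ℂ) = inner ℂ v (Q w)
    rw [hpres₂, hpres₁]
  · -- part 3
    have hTsym : ∀ x y : W, (inner ℂ (T x) y : ℂ) = inner ℂ x (T y) := fun x y =>
      hpos₁.isSymmetric x y
    clear_value T K
    -- T is coercive, hence invertible
    obtain ⟨Tinv, hTTinv, hTinvT⟩ := coercive_inverse13 T hc₁ hb₁
    -- B := T * (1 + K) is coercive, hence invertible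
    have hBapp : ∀ v : W, (T * (1 + K)) v = T v + T (K v) := by
      intro v
      simp [ContinuousLinearMap.mul_apply, ContinuousLinearMap.add_apply, map_add]
    have hBcoer : ∀ v : W, c₁ * ‖v‖ ^ 2 ≤ ((inner ℂ v ((T * (1 + K)) v) : ℂ)).re := by
      intro v
      rw [hBapp, inner_add_right, Complex.add_re]
      have h1 := hb₁ v
      have hXnn : (0:ℝ) ≤ ((inner ℂ v (T v) : ℂ)).re := le_trans (by positivity) h1
      have h2 := hK v
      nlinarith [mul_nonneg ha.le hXnn]
    obtain ⟨Binv, hBBinv, hBinvB⟩ := coercive_inverse13 (T * (1 + K)) hc₁ hBcoer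
    refine ⟨Binv * T, ?_, ?_, ?_⟩
    · -- (1 + K) * (Binv * T) = 1
      have h1 : (1 + K) * Binv = Tinv := by
        calc (1 + K) * Binv = 1 * ((1 + K) * Binv) := (one_mul _).symm
          _ = (Tinv * T) * ((1 + K) * Binv) := by rw [hTinvT]
          _ = Tinv * (T * ((1 + K) * Binv)) := mul_assoc _ _ _
          _ = Tinv * ((T * (1 + K)) * Binv) :=
              congrArg (fun x => Tinv * x) (mul_assoc T (1 + K) Binv).symm
          _ = Tinv * 1 := by rw [hBBinv]
          _ = Tinv := mul_one _
      calc (1 + K) * (Binv * T) = ((1 + K) * Binv) * T := (mul_assoc _ _ _).symm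
        _ = Tinv * T := by rw [h1]
        _ = 1 := hTinvT
    · -- (Binv * T) * (1 + K) = 1
      calc (Binv * T) * (1 + K) = Binv * (T * (1 + K)) := mul_assoc _ _ _
        _ = 1 := hBinvB
    · -- the contraction estimate
      set P : ℝ := (‖T‖ + 1) * (‖(1 : W →L[ℂ] W) + K‖ + 1) ^ 2 with hPdef
      have hP : (0:ℝ) < P := by positivity
      set δ : ℝ := 4 * a * c₁ / P with hδdef
      have hδ : (0:ℝ) < δ := by positivity
      set ε : ℝ := min δ 1 with hεdef
      have hε : (0:ℝ) < ε := lt_min hδ one_pos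
      have hε1 : ε ≤ 1 := min_le_right _ _
      refine ⟨Real.sqrt (1 - ε), Real.sqrt_nonneg _, ?_, ?_⟩
      · have h9 : Real.sqrt (1 - ε) < Real.sqrt 1 :=
          Real.sqrt_lt_sqrt (by linarith) (by linarith)
        simpa using h9
      · intro v
        have hcsq : Real.sqrt (1 - ε) ^ 2 = 1 - ε := Real.sq_sqrt (by linarith)
        rw [hcsq]
        set u : W := (Binv * T) v with hu
        clear_value u
        have hv : u + K u = v := by
          have h := congrArg (fun f : W →L[ℂ] W => f v)
            (show (1 + K) * (Binv * T) = 1 from by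
              calc (1 + K) * (Binv * T) = ((1 + K) * Binv) * T := (mul_assoc _ _ _).symm
                _ = Tinv * T := by
                    rw [show (1 + K) * Binv = Tinv from by
                      calc (1 + K) * Binv = 1 * ((1 + K) * Binv) := (one_mul _).symm
                        _ = (Tinv * T) * ((1 + K) * Binv) := by rw [hTinvT]
                        _ = Tinv * (T * ((1 + K) * Binv)) := mul_assoc _ _ _
                        _ = Tinv * ((T * (1 + K)) * Binv) :=
                            congrArg (fun x => Tinv * x) (mul_assoc T (1 + K) Binv).symm
                        _ = Tinv * 1 := by rw [hBBinv]
                        _ = Tinv := mul_one _]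
                _ = 1 := hTinvT)
          simpa [ContinuousLinearMap.mul_apply, ContinuousLinearMap.add_apply, hu] using h
        have hCv : ((1 - K) * (Binv * T)) v = u - K u := by
          simp [ContinuousLinearMap.mul_apply, ContinuousLinearMap.sub_apply,
            ContinuousLinearMap.one_apply, hu]
        rw [hCv]
        -- sesquilinear expansion
        have hplus : (inner ℂ v (T v) : ℂ)
            = inner ℂ u (T u) + inner ℂ u (T (K u)) + inner ℂ (K u) (T u)
              + inner ℂ (K u) (T (K u)) := by
          rw [← hv]
          rw [map_add, inner_add_left, inner_add_right, inner_add_right]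
          ring
        have hminus : (inner ℂ (u - K u) (T (u - K u)) : ℂ)
            = inner ℂ u (T u) - inner ℂ u (T (K u)) - inner ℂ (K u) (T u)
              + inner ℂ (K u) (T (K u)) := by
          rw [map_sub, inner_sub_left, inner_sub_right, inner_sub_right]
          ring
        have hresym : ((inner ℂ (K u) (T u) : ℂ)).re = ((inner ℂ u (T (K u)) : ℂ)).re := by
          have h1 : (inner ℂ (K u) (T u) : ℂ) = starRingEnd ℂ (inner ℂ (T u) (K u) : ℂ) :=
            (inner_conj_symm _ _).symm
          rw [h1, hTsym u (K u), Complex.conj_re]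
        -- key inequality: ε * (v|v)₁ ≤ 4 * (u|Ku)₁
        have hkeyineq : ε * ((inner ℂ v (T v) : ℂ)).re
            ≤ 4 * ((inner ℂ u (T (K u)) : ℂ)).re := by
          have hVre : ((inner ℂ v (T v) : ℂ)).re ≤ (‖T‖ + 1) * ‖v‖ ^ 2 := by
            have h1 : ((inner ℂ v (T v) : ℂ)).re ≤ ‖(inner ℂ v (T v) : ℂ)‖ :=
              (Complex.abs_re_le_norm _).trans'
                (le_abs_self _)
            have h2 : ‖(inner ℂ v (T v) : ℂ)‖ ≤ ‖v‖ * ‖T v‖ := norm_inner_le_norm _ _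
            have h3 : ‖T v‖ ≤ ‖T‖ * ‖v‖ := T.le_opNorm v
            nlinarith [norm_nonneg v, norm_nonneg T]
          have hvu : ‖v‖ ≤ (‖(1 : W →L[ℂ] W) + K‖ + 1) * ‖u‖ := by
            have h4 : ‖((1 : W →L[ℂ] W) + K) u‖ ≤ ‖(1 : W →L[ℂ] W) + K‖ * ‖u‖ :=
              ((1 : W →L[ℂ] W) + K).le_opNorm u
            have h5 : ((1 : W →L[ℂ] W) + K) u = v := by
              simpa [ContinuousLinearMap.add_apply] using hv
            rw [h5] at h4
            nlinarith [norm_nonneg u]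
          have hf1 : ((inner ℂ v (T v) : ℂ)).re ≤ P * ‖u‖ ^ 2 := by
            have h6 : ‖v‖ ^ 2 ≤ ((‖(1 : W →L[ℂ] W) + K‖ + 1) * ‖u‖) ^ 2 :=
              pow_le_pow_left₀ (norm_nonneg v) hvu 2
            calc ((inner ℂ v (T v) : ℂ)).re ≤ (‖T‖ + 1) * ‖v‖ ^ 2 := hVre
              _ ≤ (‖T‖ + 1) * ((‖(1 : W →L[ℂ] W) + K‖ + 1) * ‖u‖) ^ 2 := by
                  exact mul_le_mul_of_nonneg_left h6 (by positivity)
              _ = P * ‖u‖ ^ 2 := by rw [hPdef]; ring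
          have hf4 : δ * P = 4 * a * c₁ := div_mul_cancel₀ _ hP.ne'
          have hf3 : a * (c₁ * ‖u‖ ^ 2) ≤ ((inner ℂ u (T (K u)) : ℂ)).re := by
            have h7 : a * (c₁ * ‖u‖ ^ 2) ≤ a * ((inner ℂ u (T u) : ℂ)).re :=
              mul_le_mul_of_nonneg_left (hb₁ u) ha.le
            have h8 := hK u
            linarith
          have hεδ : ε ≤ δ := min_le_left _ _
          have hu2 : (0:ℝ) ≤ ‖u‖ ^ 2 := sq_nonneg _
          calc ε * ((inner ℂ v (T v) : ℂ)).re ≤ ε * (P * ‖u‖ ^ 2) :=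
                mul_le_mul_of_nonneg_left hf1 hε.le
            _ ≤ δ * (P * ‖u‖ ^ 2) := mul_le_mul_of_nonneg_right hεδ (by positivity)
            _ = (δ * P) * ‖u‖ ^ 2 := by ring
            _ = 4 * a * c₁ * ‖u‖ ^ 2 := by rw [hf4]
            _ = 4 * (a * (c₁ * ‖u‖ ^ 2)) := by ring
            _ ≤ 4 * ((inner ℂ u (T (K u)) : ℂ)).re := by linarith
        -- conclude
        have hplusre : ((inner ℂ v (T v) : ℂ)).re
            = ((inner ℂ u (T u) : ℂ)).re + ((inner ℂ u (T (K u)) : ℂ)).re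
              + ((inner ℂ (K u) (T u) : ℂ)).re + ((inner ℂ (K u) (T (K u)) : ℂ)).re := by
          rw [hplus]; simp only [Complex.add_re]
        have hminusre : ((inner ℂ (u - K u) (T (u - K u)) : ℂ)).re
            = ((inner ℂ u (T u) : ℂ)).re - ((inner ℂ u (T (K u)) : ℂ)).re
              - ((inner ℂ (K u) (T u) : ℂ)).re + ((inner ℂ (K u) (T (K u)) : ℂ)).re := by
          rw [hminus]; simp only [Complex.add_re, Complex.sub_re]
        have hrw : (1 - ε) * ((inner ℂ v (T v) : ℂ)).re
            = ((inner ℂ v (T v) : ℂ)).re - ε * ((inner ℂ v (T v) : ℂ)).re := by ring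
        rw [hrw]
        linarith [hkeyineq, hplusre, hminusre, hresym]
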